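/- arXiv:1112.4239 — 3 statements merged into one kernel-verified Lean document; each statement's English description precedes it below -/
import Mathlib

section
/- Let G be a compact, Hausdorff, totally disconnected topological group and α a topologically transitive topological group automorphism of G. If N is a finite normal subgroup of G with α(N) = N, then N is contained in the centre of G. -/
open Pointwise Filter Topology

variable {G : Type*}

/-- `V₊ = ⋂_{k ≥ 0} α^k(V)`. -/
def plusPart [Group G] (α : MulAut G) (V : Set G) : Set G :=
  ⋂ k : ℕ, ⇑(α ^ k) '' V

/-- `V₋ = ⋂_{k ≥ 0} α^{-k}(V)`. -/
def minusPart [Group G] (α : MulAut G) (V : Set G) : Set G :=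
  ⋂ k : ℕ, ⇑(α⁻¹ ^ k) '' V

/-- `V` is tidy above for `α` if `V = V₊V₋`. -/
def TidyAbove [Group G] (α : MulAut G) (V : Set G) : Prop :=
  V = plusPart α V * minusPart α V

/-- `V` is tidy below for `α` if `V₊₊` and `V₋₋` are closed. -/
def TidyBelow [Group G] [TopologicalSpace G] (α : MulAut G) (V : Set G) : Prop :=
  IsClosed (⋃ k : ℕ, ⇑(α ^ k) '' plusPart α V) ∧
  IsClosed (⋃ k : ℕ, ⇑(α⁻¹ ^ k) '' minusPart α V)

/-- `V` is tidy for `α` if it is tidy above and tidy below. -/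
def Tidy [Group G] [TopologicalSpace G] (α : MulAut G) (V : Set G) : Prop :=
  TidyAbove α V ∧ TidyBelow α V

/-- The nub of `α`: the intersection of all compact open subgroups tidy for `α`. -/
def nub [Group G] [TopologicalSpace G] (α : MulAut G) : Subgroup G :=
  ⨅ V ∈ {V : Subgroup G | IsCompact (V : Set G) ∧ IsOpen (V : Set G) ∧ Tidy α (V : Set G)}, V

/-- The contraction group `con(α) = { x | α^n(x) → 1 as n → ∞ }`. -/
def conSet [Group G] [TopologicalSpace G] (α : MulAut G) : Set G :=
  {x : G | Tendsto (fun n : ℕ => (α ^ n) x) atTop (𝓝 1)}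

/-- The homoclinic (two-sided contraction) group `bcg(α) = con(α) ∩ con(α⁻¹)`. -/
def bcgSet [Group G] [TopologicalSpace G] (α : MulAut G) : Set G :=
  conSet α ∩ conSet α⁻¹

/-- The bounded contraction group `bcon(α)`. -/
def bconSet [Group G] [TopologicalSpace G] (α : MulAut G) : Set G :=
  {x ∈ conSet α | IsCompact (closure (Set.range fun n : ℕ => (α⁻¹ ^ n) x))}

/-- Image of a subgroup under an automorphism. -/
def mapAut [Group G] (α : MulAut G) (V : Subgroup G) : Subgroup G where
  carrier := ⇑α '' (V : Set G)
  one_mem' := ⟨1, V.one_mem, map_one α⟩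
  mul_mem' := by
    rintro a b ⟨a', ha, rfl⟩ ⟨b', hb, rfl⟩
    exact ⟨a' * b', V.mul_mem ha hb, map_mul α a' b'⟩
  inv_mem' := by
    rintro a ⟨a', ha, rfl⟩
    exact ⟨a'⁻¹, V.inv_mem ha, map_inv α a'⟩

/-- `V₊` as a subgroup. -/
def plusSub [Group G] (α : MulAut G) (V : Subgroup G) : Subgroup G :=
  ⨅ k : ℕ, mapAut (α ^ k) V

/-- `V₋` as a subgroup. -/
def minusSub [Group G] (α : MulAut G) (V : Subgroup G) : Subgroup G :=
  ⨅ k : ℕ, mapAut (α⁻¹ ^ k) V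

/-- The shift automorphism of `F^ℤ`. -/
def shiftAut (F : Type*) [Group F] : MulAut (ℤ → F) where
  toFun f := fun n => f (n + 1)
  invFun f := fun n => f (n - 1)
  left_inv f := by funext n; show f (n - 1 + 1) = f n; congr 1; omega
  right_inv f := by funext n; show f (n + 1 - 1) = f n; congr 1; omega
  map_mul' f g := rfl

/-- For a topologically transitive compact pair, every finite normal
`α`-stable subgroup is central. -/
theorem finite_normal_stable_le_center
    [Group G] [TopologicalSpace G] [IsTopologicalGroup G] [T2Space G]
    [TotallyDisconnectedSpace G] [CompactSpace G]
    (α : MulAut G) (hαc : Continuous ⇑α) (hαc' : Continuous ⇑(α⁻¹))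
    (htt : ∃ x : G, Dense (Set.range fun n : ℤ => (α ^ n) x))
    (N : Subgroup G) (hNfin : (N : Set G).Finite) [N.Normal]
    (hNs : ⇑α '' (N : Set G) = (N : Set G)) :
    N ≤ Subgroup.center G := by
  classical
  obtain ⟨x, hx⟩ := htt
  set K : Subgroup G := Subgroup.centralizer (N : Set G) with hK
  -- membership transfer along α
  have hmemα : ∀ n : G, n ∈ N → α n ∈ N := by
    intro n hn
    have : α n ∈ ⇑α '' (N : Set G) := ⟨n, hn, rfl⟩
    rwa [hNs] at this
  have hmemα' : ∀ n : G, n ∈ N → α⁻¹ n ∈ N := by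
    intro n hn
    have hn' : n ∈ ⇑α '' (N : Set G) := by rw [hNs]; exact hn
    obtain ⟨m, hm, hmn⟩ := hn' 
    have : α⁻¹ n = m := by
      rw [← hmn]; exact α.left_inv m
    rwa [this]
  -- K is open
  have hKopen : IsOpen (K : Set G) := by
    have heq : (K : Set G) = ⋂ n ∈ (N : Set G), (fun g => g * n * g⁻¹) ⁻¹' {n} := by
      ext g
      simp only [Set.mem_iInter, Set.mem_preimage, Set.mem_singleton_iff, SetLike.mem_coe,
        hK, Subgroup.mem_centralizer_iff]
      constructor
      · intro h n hn
        have := h n hn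
        group
        rw [← this]
        group
      · intro h n hn
        have := h n hn
        calc n * g = (g * n * g⁻¹) * g := by rw [this]
        _ = g * n := by group
    rw [heq]
    refine hNfin.isOpen_biInter ?_
    intro n hn
    have hf : Continuous (fun g : G => g * n * g⁻¹) := by continuity
    have himg : ∀ g : G, g * n * g⁻¹ ∈ (N : Set G) := fun g =>
      Subgroup.Normal.conj_mem ‹N.Normal› n hn g
    have hset : (fun g : G => g * n * g⁻¹) ⁻¹' {n}
        = (fun g : G => g * n * g⁻¹) ⁻¹' ((N : Set G) \ {n})ᶜ := by
      ext g
      simp only [Set.mem_preimage, Set.mem_singleton_iff, Set.mem_compl_iff, Set.mem_diff,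
        SetLike.mem_coe]
      constructor
      · intro h hc; exact hc.2 h
      · intro h; by_contra hc; exact h ⟨himg g, hc⟩
    rw [hset]
    exact (((hNfin.subset Set.diff_subset).isClosed).isOpen_compl).preimage hf
  have hKclosed : IsClosed (K : Set G) := K.isClosed_of_isOpen hKopen
  -- α-stability of K
  have hKiff : ∀ g : G, α g ∈ K ↔ g ∈ K := by
    intro g
    simp only [hK, Subgroup.mem_centralizer_iff]
    constructor
    · intro h n hn
      have h2 := h (α n) (hmemα n hn)
      have : α (n * g) = α (g * n) := by
        rw [map_mul, map_mul]; exact h2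
      exact α.injective this
    · intro h n hn
      have h2 := h (α⁻¹ n) (hmemα' n hn)
      have := congrArg (⇑α) h2
      rw [map_mul, map_mul] at this
      rwa [MulAut.apply_inv_self] at this
  have hKiff' : ∀ g : G, α⁻¹ g ∈ K ↔ g ∈ K := by
    intro g
    have := hKiff (α⁻¹ g)
    rw [MulAut.apply_inv_self] at this
    exact this.symm
  have hKzpow : ∀ (m : ℤ) (g : G), (α ^ m) g ∈ K ↔ g ∈ K := by
    intro m
    induction m using Int.induction_on with
    | zero => intro g; simp
    | succ k ih =>
      intro g
      have hpow : (α ^ ((k : ℤ) + 1)) g = α ((α ^ (k : ℤ)) g) := by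
        rw [add_comm, zpow_add, zpow_one]; rfl
      rw [hpow, hKiff]
      exact ih g
    | pred k ih =>
      intro g
      have hpow : (α ^ (-(k : ℤ) - 1)) g = α⁻¹ ((α ^ (-(k : ℤ))) g) := by
        rw [sub_eq_add_neg, add_comm, zpow_add, zpow_neg, zpow_one]; rfl
      rw [hpow, hKiff']
      exact ih g
  -- dense orbit meets the open subgroup K
  have h1K : (1 : G) ∈ K := K.one_mem
  obtain ⟨y, ⟨k, rfl⟩, hyK⟩ := hx.exists_mem_open hKopen ⟨1, h1K⟩
  have hxK : x ∈ K := (hKzpow k x).mp hyK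
  have hrange : Set.range (fun n : ℤ => (α ^ n) x) ⊆ (K : Set G) := by
    rintro - ⟨m, rfl⟩
    exact (hKzpow m x).mpr hxK
  have hall : ∀ g : G, g ∈ K := by
    intro g
    have := hx.closure_eq
    have hsub : closure (Set.range fun n : ℤ => (α ^ n) x) ⊆ (K : Set G) :=
      hKclosed.closure_subset_iff.mpr hrange
    rw [this] at hsub
    exact hsub (Set.mem_univ g)
  intro n hn
  rw [Subgroup.mem_center_iff]
  intro g
  exact ((Subgroup.mem_centralizer_iff.mp (hall g)) n hn).symm
end

section
/- Let F be a finite group and let N be a closed normal subgroup of F^ℤ with σ(N) = N and N ∩ F^[ℤ] = {1}. Then N is finite and N is contained in the centre of F^ℤ. -/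
open Pointwise Filter Topology

variable {G : Type*}

private lemma clusterAux {F : Type*} [Finite F] [TopologicalSpace F] [DiscreteTopology F]
    (Mset : Set (ℤ → F)) (hcl : IsClosed Mset) (w : ℕ → (ℤ → F)) (hw : ∀ j, w j ∈ Mset) :
    ∃ x ∈ Mset, ∀ s : Finset ℤ, ∀ J : ℕ, ∃ j, J ≤ j ∧ ∀ k ∈ s, w j k = x k := by
  obtain ⟨x, hxM, hx⟩ := hcl.isCompact.exists_clusterPt (f := Filter.map w Filter.atTop)
    (Filter.le_principal_iff.mpr (Filter.mem_map.mpr (Filter.univ_mem' hw)))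
  refine ⟨x, hxM, fun s J => ?_⟩
  have hUo : IsOpen (⋂ k ∈ s, (fun y : ℤ → F => y k) ⁻¹' {x k}) :=
    isOpen_biInter_finset fun k _ => (continuous_apply k).isOpen_preimage _ (isOpen_discrete _)
  have hxU : x ∈ ⋂ k ∈ s, (fun y : ℤ → F => y k) ⁻¹' {x k} := by
    simp
  have hU : (⋂ k ∈ s, (fun y : ℤ → F => y k) ⁻¹' {x k}) ∈ 𝓝 x := hUo.mem_nhds hxU
  have hV : w '' Set.Ici J ∈ Filter.map w Filter.atTop :=
    Filter.image_mem_map (Filter.Ici_mem_atTop J)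
  haveI hne : (𝓝 x ⊓ Filter.map w Filter.atTop).NeBot := hx
  obtain ⟨y, hyU, j, hj, rfl⟩ := Filter.nonempty_of_mem
    (Filter.inter_mem (Filter.mem_inf_of_left hU) (Filter.mem_inf_of_right hV))
  exact ⟨j, hj, fun k hk => Set.mem_iInter₂.mp hyU k hk⟩

private lemma mlAux {F : Type*} [Group F] [Finite F] [TopologicalSpace F] [DiscreteTopology F]
    (M : Subgroup (ℤ → F)) (hcl : IsClosed (M : Set (ℤ → F)))
    (hfwd : ∀ x ∈ M, (fun n : ℤ => x (n + 1)) ∈ M)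
    (hbwd : ∀ x ∈ M, (fun n : ℤ => x (n - 1)) ∈ M)
    (hfin : ∀ x ∈ M, (Function.mulSupport x).Finite → x = 1) :
    ∃ m : ℕ, 1 ≤ m ∧ ∀ x ∈ M, (∀ k : ℤ, 0 ≤ k → k < (m : ℤ) → x k = 1) →
      ∀ k : ℤ, 0 ≤ k → x k = 1 := by
  -- shifts
  have hS : ∀ d : ℤ, ∀ x ∈ M, (fun n : ℤ => x (n + d)) ∈ M := by
    intro d
    induction d using Int.induction_on with
    | zero => intro x hx; simpa using hx
    | succ i ih =>
      intro x hx
      have h1 := hfwd _ (ih x hx)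
      have he : (fun n : ℤ => x (n + ((i : ℤ) + 1))) =
          (fun n : ℤ => (fun n' : ℤ => x (n' + (i : ℤ))) (n + 1)) := by
        funext n; congr 1; ring
      rw [he]; exact h1
    | pred i ih =>
      intro x hx
      have h1 := hbwd _ (ih x hx)
      have he : (fun n : ℤ => x (n + (-(i : ℤ) - 1))) =
          (fun n : ℤ => (fun n' : ℤ => x (n' + -(i : ℤ))) (n - 1)) := by
        funext n; congr 1; ring
      rw [he]; exact h1
  -- the decreasing sequence of "extension" subsets of F
  let L : ℕ → Set F := fun n =>
    {a | ∃ x ∈ M, (∀ k : ℤ, 0 ≤ k → k < (n : ℤ) → x k = 1) ∧ x (n : ℤ) = a}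
  have hmono : ∀ n : ℕ, L (n + 1) ⊆ L n := by
    rintro n a ⟨x, hxM, hvan, hval⟩
    refine ⟨fun k => x (k + 1), hfwd x hxM, fun k hk0 hk1 => hvan _ (by omega)
      (by push_cast; omega), ?_⟩
    show x ((n : ℤ) + 1) = a
    have : ((n : ℕ) + 1 : ℤ) = ((n + 1 : ℕ) : ℤ) := by push_cast; ring
    rw [this]; exact hval
  have hanti : Antitone L := antitone_nat_of_succ_le hmono
  obtain ⟨m0, hm0⟩ : ∃ m0 : ℕ, ∀ n : ℕ, m0 ≤ n → L n = L m0 := by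
    obtain ⟨m0, hgm0⟩ : sInf (Set.range fun n => (L n).ncard) ∈
        (Set.range fun n => (L n).ncard) := Nat.sInf_mem ⟨(L 0).ncard, 0, rfl⟩
    refine ⟨m0, fun n hn => ?_⟩
    refine Set.eq_of_subset_of_ncard_le (hanti hn) ?_ (Set.toFinite _)
    calc (L m0).ncard = sInf (Set.range fun n => (L n).ncard) := hgm0
      _ ≤ (L n).ncard := Nat.sInf_le ⟨n, rfl⟩
  set m : ℕ := m0 + 1 with hmdef
  have hm1 : 1 ≤ m := by omega
  have hstab : ∀ n : ℕ, m ≤ n → L n = L m := by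
    intro n hn
    rw [hm0 n (by omega), hm0 m (by omega)]
  by_cases hL1 : ∀ a ∈ L m, a = 1
  · -- forward determinism
    refine ⟨m, hm1, fun x hxM hvan => ?_⟩
    have key : ∀ j : ℕ, ∀ k : ℤ, 0 ≤ k → k < (m : ℤ) + j → x k = 1 := by
      intro j
      induction j with
      | zero => intro k h0 h1; exact hvan k h0 (by omega)
      | succ j ih =>
        intro k h0 h1
        rcases lt_or_ge k ((m : ℤ) + j) with h | h
        · exact ih k h0 h
        have hk : k = (m : ℤ) + j := by omega
        subst hk
        have hmem : x ((m : ℤ) + j) ∈ L (m + j) := by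
          refine ⟨x, hxM, fun k' h0' h1' => ih k' h0' (by push_cast at h1'; omega), ?_⟩
          norm_cast
        rw [hstab (m + j) (by omega)] at hmem
        exact hL1 _ hmem
    intro k hk0
    exact key (k.toNat + 1) k hk0 (by push_cast; omega)
  · exfalso
    push_neg at hL1
    obtain ⟨a, haL, ha1⟩ := hL1
    -- left-infinite witnesses
    have W : ∀ b ∈ L m, ∀ e : ℤ, ∃ x ∈ M, (∀ k : ℤ, k < e → x k = 1) ∧ x e = b := by
      intro b hb e
      have hwit : ∀ j : ℕ, ∃ x ∈ M,
          (∀ k : ℤ, e - (m : ℤ) - j ≤ k → k < e → x k = 1) ∧ x e = b := by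
        intro j
        have hb' : b ∈ L (m + j) := by rw [hstab (m + j) (by omega)]; exact hb
        obtain ⟨x, hxM, hvan, hval⟩ := hb'
        refine ⟨fun n => x (n + ((m : ℤ) + j - e)), hS _ x hxM, ?_, ?_⟩
        · intro k hk1 hk2
          exact hvan _ (by omega) (by push_cast; omega)
        · show x (e + ((m : ℤ) + j - e)) = b
          have he2 : e + ((m : ℤ) + j - e) = ((m + j : ℕ) : ℤ) := by push_cast; ring
          rw [he2]; exact hval
      choose w hwM hwvan hwval using hwit
      obtain ⟨x, hxM, hx⟩ := clusterAux (M : Set (ℤ → F)) hcl w hwM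
      refine ⟨x, hxM, ?_, ?_⟩
      · intro k hk
        obtain ⟨j, hj, hjk⟩ := hx {k} (e - (m : ℤ) - k).toNat
        rw [← hjk k (Finset.mem_singleton_self k)]
        refine hwvan j k ?_ hk
        have h1 : (e - (m : ℤ) - k) ≤ ((e - (m : ℤ) - k).toNat : ℤ) := Int.self_le_toNat _
        have h2 : (((e - (m : ℤ) - k).toNat : ℕ) : ℤ) ≤ (j : ℤ) := by exact_mod_cast hj
        omega
      · obtain ⟨j, _, hjk⟩ := hx {e} 0
        rw [← hjk e (Finset.mem_singleton_self e)]
        exact hwval j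
    -- extend vanishing rightwards keeping the left part
    have Csucc : ∀ h ∈ M, ∀ c : ℤ, (∀ k, c ≤ k → k < c + (m : ℤ) → h k = 1) →
        ∀ i : ℕ, ∃ y ∈ M, (∀ k, c ≤ k → k < c + (m : ℤ) + i → y k = 1) ∧
          (∀ k, k < c → y k = h k) := by
      intro h hhM c hvan i
      induction i with
      | zero =>
        exact ⟨h, hhM, fun k h1 h2 => hvan k h1 (by push_cast at h2; omega),
          fun _ _ => rfl⟩
      | succ i ih =>
        obtain ⟨y, hyM, hyvan, hyeq⟩ := ih
        have hbmem : y (c + (m : ℤ) + i) ∈ L m := by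
          have hmem : y (c + (m : ℤ) + i) ∈ L (m + i) := by
            refine ⟨fun n => y (n + c), hS c y hyM,
              fun k h0 h1 => hyvan _ (by omega) (by push_cast at h1; omega), ?_⟩
            show y (((m + i : ℕ) : ℤ) + c) = _
            congr 1; push_cast; ring
          rwa [hstab (m + i) (by omega)] at hmem
        obtain ⟨z, hzM, hzvan, hzval⟩ := W _ hbmem (c + (m : ℤ) + i)
        refine ⟨y * z⁻¹, M.mul_mem hyM (M.inv_mem hzM), ?_, ?_⟩
        · intro k h1 h2
          show y k * (z k)⁻¹ = 1
          rcases lt_or_ge k (c + (m : ℤ) + i) with h3 | h3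
          · rw [hyvan k h1 h3, hzvan k h3]; simp
          · have hk : k = c + (m : ℤ) + i := by push_cast at h2; omega
            subst hk
            rw [hzval]; simp
        · intro k hk
          show y k * (z k)⁻¹ = h k
          rw [hzvan k (by omega), hyeq k hk]; simp
    have hminus : ∀ h ∈ M, ∀ c : ℤ, (∀ k, c ≤ k → k < c + (m : ℤ) → h k = 1) →
        ∃ y ∈ M, (∀ k, c ≤ k → y k = 1) ∧ (∀ k, k < c → y k = h k) := by
      intro h hhM c hvan
      choose y hyM hyvan hyeq using Csucc h hhM c hvan
      obtain ⟨x, hxM, hx⟩ := clusterAux (M : Set (ℤ → F)) hcl y hyM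
      refine ⟨x, hxM, ?_, ?_⟩
      · intro k hk
        obtain ⟨j, hj, hjk⟩ := hx {k} (k - c - (m : ℤ) + 1).toNat
        rw [← hjk k (Finset.mem_singleton_self k)]
        refine hyvan j k hk ?_
        have h1 : (k - c - (m : ℤ) + 1) ≤ ((k - c - (m : ℤ) + 1).toNat : ℤ) :=
          Int.self_le_toNat _
        have h2 : (((k - c - (m : ℤ) + 1).toNat : ℕ) : ℤ) ≤ (j : ℤ) := by exact_mod_cast hj
        omega
      · intro k hk
        obtain ⟨j, _, hjk⟩ := hx {k} 0
        rw [← hjk k (Finset.mem_singleton_self k)]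
        exact hyeq j k hk
    -- the gluing lemma
    have glue : ∀ u ∈ M, ∀ v ∈ M, ∀ c : ℤ, (∀ k, c ≤ k → k < c + (m : ℤ) → u k = v k) →
        ∃ w ∈ M, (∀ k, k < c + (m : ℤ) → w k = u k) ∧ (∀ k, c ≤ k → w k = v k) := by
      intro u huM v hvM c hagree
      have hhM : v * u⁻¹ ∈ M := M.mul_mem hvM (M.inv_mem huM)
      have hvan : ∀ k, c ≤ k → k < c + (m : ℤ) → (v * u⁻¹) k = 1 := by
        intro k h1 h2
        show v k * (u k)⁻¹ = 1
        rw [← hagree k h1 h2]; simp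
      obtain ⟨y, hyM, hyvan, hyeq⟩ := hminus _ hhM c hvan
      refine ⟨y⁻¹ * v, M.mul_mem (M.inv_mem hyM) hvM, ?_, ?_⟩
      · intro k hk
        show (y k)⁻¹ * v k = u k
        rcases lt_or_ge k c with h | h
        · rw [hyeq k h]
          show (v k * (u k)⁻¹)⁻¹ * v k = u k
          group
        · rw [hyvan k h, ← hagree k h hk]; simp
      · intro k hk
        show (y k)⁻¹ * v k = v k
        rw [hyvan k hk]; simp
    -- the basic aperiodic-looking element
    obtain ⟨x₀, hx0M, hx0van, hx0val⟩ := W a haL 0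
    -- pigeonhole on words of length m at positions 1 + j*m
    obtain ⟨j, j', hne, heq⟩ := Finite.exists_ne_map_eq_of_infinite
      (fun j : ℕ => (fun i : Fin m => x₀ (1 + (j : ℤ) * m + (i : ℤ))))
    obtain ⟨j, j', hjj, hw⟩ : ∃ j j' : ℕ, j < j' ∧
        ∀ i : ℤ, 0 ≤ i → i < (m : ℤ) →
          x₀ (1 + (j : ℤ) * m + i) = x₀ (1 + (j' : ℤ) * m + i) := by
      have hword : ∀ (j j' : ℕ), (fun i : Fin m => x₀ (1 + (j : ℤ) * m + (i : ℤ))) =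
          (fun i : Fin m => x₀ (1 + (j' : ℤ) * m + (i : ℤ))) →
          ∀ i : ℤ, 0 ≤ i → i < (m : ℤ) →
            x₀ (1 + (j : ℤ) * m + i) = x₀ (1 + (j' : ℤ) * m + i) := by
        intro j j' hjeq i h0 h1
        have := congrFun hjeq ⟨i.toNat, by omega⟩
        simpa [Int.toNat_of_nonneg h0] using this
      rcases hne.lt_or_gt with h | h
      · exact ⟨j, j', h, hword j j' heq⟩
      · exact ⟨j', j, h, hword j' j heq.symm⟩
    set t0 : ℤ := 1 + (j : ℤ) * m with ht0def
    set t1 : ℤ := 1 + (j' : ℤ) * m with ht1def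
    set p : ℤ := t1 - t0 with hpdef
    have hpm : (m : ℤ) ≤ p := by
      have h1 : (1 : ℤ) ≤ (j' : ℤ) - j := by
        have : (j : ℤ) < (j' : ℤ) := by exact_mod_cast hjj
        omega
      have h2 : p = ((j' : ℤ) - j) * m := by rw [hpdef, ht0def, ht1def]; ring
      rw [h2]
      nlinarith [Int.natCast_nonneg m]
    have hp1 : (1 : ℤ) ≤ p := le_trans (by exact_mod_cast hm1) hpm
    have ht0pos : (0 : ℤ) < t0 := by positivity
    have ht1p : t1 = t0 + p := by omega
    have hword : ∀ i : ℤ, 0 ≤ i → i < (m : ℤ) → x₀ (t0 + i) = x₀ (t1 + i) := hw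
    -- the eventually periodic element
    set y : ℤ → F := fun k => if k < t0 then x₀ k else x₀ (t0 + (k - t0) % p) with hydef
    have hyP1 : ∀ k, k < t1 → y k = x₀ k := by
      intro k hk
      by_cases h : k < t0
      · simp only [hydef, if_pos h]
      · have h0 : 0 ≤ k - t0 := by omega
        have h1 : k - t0 < p := by omega
        simp only [hydef, if_neg h]
        rw [Int.emod_eq_of_lt h0 h1]
        congr 1; ring
    have hyP2 : ∀ k, t1 ≤ k → y k = y (k - p) := by
      intro k hk
      have h1 : ¬ k < t0 := by omega
      have h2 : ¬ k - p < t0 := by omega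
      simp only [hydef, if_neg h1, if_neg h2]
      congr 2
      have he : k - t0 = (k - p - t0) + p * 1 := by ring
      rw [he, Int.add_mul_emod_self_left]
    -- approximations lie in M
    have R : ∀ s : ℕ, ∃ z ∈ M, ∀ k, k < t1 + ((s : ℤ) + 1) * p → z k = y k := by
      intro s
      induction s with
      | zero =>
        obtain ⟨w, hwM, hw1, hw2⟩ := glue x₀ hx0M (fun n => x₀ (n + -p)) (hS _ _ hx0M) t1
          (by
            intro k h1 h2
            show x₀ k = x₀ (k + -p)
            have h3 := hword (k - t1) (by omega) (by omega)
            rw [show t1 + (k - t1) = k by ring] at h3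
            rw [show t0 + (k - t1) = k + -p by omega] at h3
            exact h3.symm)
        refine ⟨w, hwM, fun k hk => ?_⟩
        rcases lt_or_ge k t1 with h | h
        · rw [hw1 k (by omega), hyP1 k h]
        · rw [hw2 k h, hyP2 k h, hyP1 (k - p) (by omega)]
          show x₀ (k + -p) = x₀ (k - p)
          exact congrArg x₀ (by ring)
      | succ s ih =>
        obtain ⟨z, hzM, hz⟩ := ih
        set c : ℤ := t1 + ((s : ℤ) + 1) * p - m with hcdef
        have hct1 : t1 ≤ c := by nlinarith
        obtain ⟨w, hwM, hw1, hw2⟩ := glue z hzM (fun n => z (n + -p)) (hS _ _ hzM) c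
          (by
            intro k h1 h2
            show z k = z (k + -p)
            rw [hz k (by omega)]
            have h4 : z (k + -p) = y (k + -p) := hz (k + -p) (by omega)
            rw [h4, show k + -p = k - p by ring]
            exact hyP2 k (by omega))
        refine ⟨w, hwM, fun k hk => ?_⟩
        rcases lt_or_ge k (t1 + ((s : ℤ) + 1) * p) with h | h
        · rw [hw1 k (by omega), hz k h]
        · have h5 : c ≤ k := by omega
          rw [hw2 k h5]
          show z (k + -p) = y k
          have hr : ((s : ℤ) + 1 + 1) * p = ((s : ℤ) + 1) * p + p := by ring
          have h6 : k + -p < t1 + ((s : ℤ) + 1) * p := by push_cast at hk; omega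
          rw [hz (k + -p) h6, show k + -p = k - p by ring]
          exact (hyP2 k (by omega)).symm
    have hyM : y ∈ M := by
      choose z hzM hz using R
      have htend : Filter.Tendsto z Filter.atTop (𝓝 y) := by
        rw [tendsto_pi_nhds]
        intro k
        have hev : ∀ᶠ s in Filter.atTop, z s k = y k := by
          rw [Filter.eventually_atTop]
          refine ⟨(k - t1).toNat + 1, fun s hs => hz s k ?_⟩
          have h1 : k - t1 < (s : ℤ) + 1 := by
            have := Int.self_le_toNat (k - t1)
            have h2 : (((k - t1).toNat + 1 : ℕ) : ℤ) ≤ (s : ℤ) := by exact_mod_cast hs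
            omega
          have h2 : ((s : ℤ) + 1) * 1 ≤ ((s : ℤ) + 1) * p :=
            mul_le_mul_of_nonneg_left hp1 (by positivity)
          nlinarith
        exact Filter.Tendsto.congr' (by filter_upwards [hev] with s h using h.symm)
          tendsto_const_nhds
      exact hcl.mem_of_tendsto htend (Filter.Eventually.of_forall hzM)
    -- the finitely supported element
    have hzstarM : (fun n => y (n + -p)) * y⁻¹ ∈ M :=
      M.mul_mem (hS _ _ hyM) (M.inv_mem hyM)
    have hsupp : Function.mulSupport ((fun n => y (n + -p)) * y⁻¹) ⊆ Set.Icc 0 t1 := by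
      intro k hk
      by_contra hmem
      apply hk
      show y (k + -p) * (y k)⁻¹ = 1
      rcases lt_or_ge k 0 with h | h
      · rw [hyP1 k (by omega), hyP1 (k + -p) (by omega),
          hx0van k (by omega), hx0van (k + -p) (by omega)]
        simp
      · have h' : t1 < k := by
          by_contra h2
          exact hmem (Set.mem_Icc.mpr ⟨h, by omega⟩)
        rw [hyP2 k (by omega), show k + -p = k - p by ring]
        simp
    have hzstar1 : (fun n => y (n + -p)) * y⁻¹ = 1 :=
      hfin _ hzstarM ((Set.finite_Icc _ _).subset hsupp)
    have h0 := congrFun hzstar1 0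
    have hy0 : y 0 = a := by rw [hyP1 0 (by omega)]; exact hx0val
    have hyneg : y (0 + -p) = 1 := by
      rw [hyP1 (0 + -p) (by omega)]
      exact hx0van _ (by omega)
    apply ha1
    have h0' : y (0 + -p) * (y 0)⁻¹ = 1 := h0
    rw [hyneg, hy0] at h0'
    simpa using h0'.symm

/-- A closed normal shift-stable subgroup of `F^ℤ` meeting the finitely
supported elements trivially is finite and central. -/
theorem shift_stable_normal_trivial_inter_finite_central
    (F : Type*) [Group F] [Finite F] [TopologicalSpace F] [DiscreteTopology F]
    (N : Subgroup (ℤ → F)) (hNcl : IsClosed (N : Set (ℤ → F))) [N.Normal]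
    (hNs : ⇑(shiftAut F) '' (N : Set (ℤ → F)) = (N : Set (ℤ → F)))
    (hN1 : (N : Set (ℤ → F)) ∩ {f : ℤ → F | (Function.mulSupport f).Finite} =
      ({1} : Set (ℤ → F))) :
    (N : Set (ℤ → F)).Finite ∧ N ≤ Subgroup.center (ℤ → F) := by
  have hNfin : ∀ x ∈ N, (Function.mulSupport x).Finite → x = 1 := by
    intro x hx hsupp
    have : x ∈ ({1} : Set (ℤ → F)) := hN1 ▸ ⟨hx, hsupp⟩
    simpa using this
  have hNfwd : ∀ x ∈ N, (fun n : ℤ => x (n + 1)) ∈ N := by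
    intro x hx
    have h1 : (shiftAut F) x ∈ ⇑(shiftAut F) '' (N : Set (ℤ → F)) :=
      Set.mem_image_of_mem _ hx
    rw [hNs] at h1
    exact h1
  have hNbwd : ∀ x ∈ N, (fun n : ℤ => x (n - 1)) ∈ N := by
    intro x hx
    have hx' : x ∈ ⇑(shiftAut F) '' (N : Set (ℤ → F)) := by rw [hNs]; exact hx
    obtain ⟨y, hyN, hyx⟩ := hx'
    have he : (fun n : ℤ => x (n - 1)) = y := by
      funext n
      rw [← hyx]
      show y (n - 1 + 1) = y n
      congr 1; ring
    rw [he]; exact hyN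
  -- the reflected subgroup
  let ρ : (ℤ → F) →* (ℤ → F) :=
    { toFun := fun x => fun n => x (-n), map_one' := rfl, map_mul' := fun x y => rfl }
  let N' : Subgroup (ℤ → F) := N.map ρ
  have hmemN' : ∀ x : ℤ → F, x ∈ N' ↔ ∃ y ∈ N, ρ y = x := by
    intro x; exact Subgroup.mem_map
  have hNcl' : IsClosed (N' : Set (ℤ → F)) := by
    have himg : (N' : Set (ℤ → F)) = (fun x : ℤ → F => fun n => x (-n)) ⁻¹' N := by
      ext x
      constructor
      · intro hx
        obtain ⟨y, hy, rfl⟩ := (hmemN' x).mp hx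
        show (fun n : ℤ => (ρ y) (-n)) ∈ N
        have : (fun n : ℤ => (ρ y) (-n)) = y := by
          funext n; show y (-(-n)) = y n; congr 1; ring
        rw [this]; exact hy
      · intro hx
        refine (hmemN' x).mpr ⟨fun n => x (-n), hx, ?_⟩
        funext n; show x (-(-n)) = x n; congr 1; ring
    rw [himg]
    exact hNcl.preimage (continuous_pi fun n => continuous_apply (-n))
  have hN'fwd : ∀ x ∈ N', (fun n : ℤ => x (n + 1)) ∈ N' := by
    intro x hx
    obtain ⟨y, hy, rfl⟩ := (hmemN' x).mp hx
    refine (hmemN' _).mpr ⟨fun n => y (n - 1), hNbwd y hy, ?_⟩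
    funext n; show y (-n - 1) = y (-(n + 1)); congr 1; ring
  have hN'bwd : ∀ x ∈ N', (fun n : ℤ => x (n - 1)) ∈ N' := by
    intro x hx
    obtain ⟨y, hy, rfl⟩ := (hmemN' x).mp hx
    refine (hmemN' _).mpr ⟨fun n => y (n + 1), hNfwd y hy, ?_⟩
    funext n; show y (-n + 1) = y (-(n - 1)); congr 1; ring
  have hN'fin : ∀ x ∈ N', (Function.mulSupport x).Finite → x = 1 := by
    intro x hx hsupp
    obtain ⟨y, hy, rfl⟩ := (hmemN' x).mp hx
    have hys : Function.mulSupport y ⊆ (fun k : ℤ => -k) ⁻¹' Function.mulSupport (ρ y) := by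
      intro k hk
      show ρ y (-k) ≠ 1
      show y (-(-k)) ≠ 1
      rw [neg_neg]
      exact hk
    have hy1 : y = 1 :=
      hNfin y hy ((hsupp.preimage (neg_injective.injOn)).subset hys)
    rw [hy1]
    exact map_one ρ
  obtain ⟨m₁, hm₁, H₁⟩ := mlAux N hNcl hNfwd hNbwd hNfin
  obtain ⟨m₂, hm₂, H₂⟩ := mlAux N' hNcl' hN'fwd hN'bwd hN'fin
  have hzero : ∀ x ∈ N, (∀ k : ℤ, -(m₂ : ℤ) ≤ k → k ≤ (m₁ : ℤ) → x k = 1) → x = 1 := by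
    intro x hxN hvan
    funext k
    show x k = 1
    rcases le_or_gt 0 k with h | h
    · exact H₁ x hxN (fun k' h0 h1 => hvan k' (by omega) (by omega)) k h
    · have hx' : ρ x ∈ N' := (hmemN' _).mpr ⟨x, hxN, rfl⟩
      have h2 := H₂ (ρ x) hx'
        (fun k' h0 h1 => by show x (-k') = 1; exact hvan (-k') (by omega) (by omega))
        (-k) (by omega)
      show x k = 1
      have : x (-(-k)) = 1 := h2
      rwa [neg_neg] at this
  haveI : Finite ↥(Set.Icc (-(m₂ : ℤ)) (m₁ : ℤ)) := (Set.finite_Icc _ _).to_subtype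
  have hinj : Function.Injective
      (fun (x : N) (k : Set.Icc (-(m₂ : ℤ)) (m₁ : ℤ)) => (x : ℤ → F) (k : ℤ)) := by
    intro x x' h
    have hmem : (x : ℤ → F) * (x' : ℤ → F)⁻¹ ∈ N := N.mul_mem x.2 (N.inv_mem x'.2)
    have h1 : (x : ℤ → F) * (x' : ℤ → F)⁻¹ = 1 := by
      refine hzero _ hmem fun k hk1 hk2 => ?_
      have h2 := congrFun h ⟨k, Set.mem_Icc.mpr ⟨hk1, hk2⟩⟩
      show (x : ℤ → F) k * ((x' : ℤ → F) k)⁻¹ = 1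
      simp only at h2
      rw [h2]
      simp
    have h2 : (x : ℤ → F) = (x' : ℤ → F) := by
      have := mul_inv_eq_one.mp h1
      exact this
    exact Subtype.ext h2
  haveI : Finite ↥N := Finite.of_injective _ hinj
  constructor
  · exact Set.toFinite _
  · intro f hf
    rw [Subgroup.mem_center_iff]
    intro g
    funext n
    show g n * f n = f n * g n
    have hcomm : ∀ b : F, b * f n * b⁻¹ * (f n)⁻¹ = 1 := by
      intro b
      have hc : (Pi.mulSingle n b) * f * (Pi.mulSingle n b)⁻¹ * f⁻¹ ∈ N :=
        N.mul_mem (Subgroup.Normal.conj_mem ‹N.Normal› f hf (Pi.mulSingle n b)) (N.inv_mem hf)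
      have hsupp : Function.mulSupport ((Pi.mulSingle n b) * f * (Pi.mulSingle n b)⁻¹ * f⁻¹)
          ⊆ {n} := by
        intro k hk
        by_contra hkn
        apply hk
        simp only [Pi.mul_apply, Pi.inv_apply]
        have hb := Pi.mulSingle_eq_of_ne (M := fun _ : ℤ => F) (show k ≠ n by simpa using hkn) b
        rw [hb]
        simp
      have h1 : (Pi.mulSingle n b) * f * (Pi.mulSingle n b)⁻¹ * f⁻¹ = 1 :=
        hNfin _ hc ((Set.finite_singleton n).subset hsupp)
      have h2 := congrFun h1 n
      simp only [Pi.mul_apply, Pi.inv_apply, Pi.one_apply, Pi.mulSingle_eq_same] at h2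
      exact h2
    have h := hcomm (g n)
    have h' : g n * f n * (g n)⁻¹ = f n := by
      rwa [mul_inv_eq_one] at h
    calc g n * f n = (g n * f n * (g n)⁻¹) * g n := by group
      _ = f n * g n := by rw [h']
end

section
/- Let G be a compact, Hausdorff, totally disconnected topological group and α a topologically transitive topological group automorphism of G. Then for every integer k ≠ 0 the map η_k : G → G, η_k(x) = x⁻¹ α^k(x), is surjective. -/
open Pointwise Filter Topology

variable {G : Type*}

/-- For a topologically transitive compact pair, the map
`x ↦ x⁻¹ α^k(x)` is surjective for every `k ≠ 0`. -/
theorem eta_surjective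
    [Group G] [TopologicalSpace G] [IsTopologicalGroup G] [T2Space G]
    [TotallyDisconnectedSpace G] [CompactSpace G]
    (α : MulAut G) (hαc : Continuous ⇑α) (hαc' : Continuous ⇑(α⁻¹))
    (htt : ∃ x : G, Dense (Set.range fun n : ℤ => (α ^ n) x)) :
    ∀ k : ℤ, k ≠ 0 → Function.Surjective fun x : G => x⁻¹ * (α ^ k) x := by
  classical
  obtain ⟨x₀, hx₀⟩ := htt
  have contpow : ∀ (γ : MulAut G), Continuous ⇑γ → ∀ n : ℕ, Continuous ⇑(γ ^ n) := by
    intro γ hγ n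
    induction n with
    | zero => simpa using continuous_id
    | succ n ih =>
      have h : ⇑(γ ^ (n + 1)) = ⇑(γ ^ n) ∘ ⇑γ := by
        funext x
        simp [pow_succ]
      rw [h]; exact ih.comp hγ
  have contz : ∀ m : ℤ, Continuous ⇑(α ^ m) := by
    intro m
    cases m with
    | ofNat n => simpa using contpow α hαc n
    | negSucc n =>
      have h : α ^ (Int.negSucc n) = α⁻¹ ^ (n + 1) := by
        rw [zpow_negSucc, inv_pow]
      rw [h]; exact contpow α⁻¹ hαc' (n + 1)
  intro k hk
  set β := α ^ k with hβ
  set O : G → Set G := (fun z => Set.range fun y : G => y⁻¹ * z * β y) with hO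
  have mem_self : ∀ z, z ∈ O z := fun z => ⟨1, by simp⟩
  have Oeq : ∀ z y, O (y⁻¹ * z * β y) = O z := by
    intro z y
    ext u
    constructor
    · rintro ⟨w, rfl⟩
      refine ⟨y * w, ?_⟩
      show (y * w)⁻¹ * z * β (y * w) = w⁻¹ * (y⁻¹ * z * β y) * β w
      rw [map_mul]; group
    · rintro ⟨w, rfl⟩
      refine ⟨y⁻¹ * w, ?_⟩
      show (y⁻¹ * w)⁻¹ * (y⁻¹ * z * β y) * β (y⁻¹ * w) = w⁻¹ * z * β w
      rw [map_mul, map_inv]; group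
  have Oeq' : ∀ z w, w ∈ O z → O w = O z := by
    rintro z w ⟨y, rfl⟩; exact Oeq z y
  have Obeta : ∀ z, O (β z) = O z := by
    intro z
    have h : β z = z⁻¹ * z * β z := by group
    rw [h, Oeq]
  have Ocompact : ∀ z, IsCompact (O z) := by
    intro z
    exact isCompact_range ((continuous_inv.mul continuous_const).mul (contz k))
  have hcomm : ∀ y : G, α (β y) = β (α y) := by
    intro y
    have h : α * β = β * α := ((Commute.refl α).zpow_right k).eq
    calc α (β y) = (α * β) y := rfl
      _ = (β * α) y := by rw [h]
      _ = β (α y) := rfl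
  have Oalpha : ∀ z, O (α z) = ⇑α '' O z := by
    intro z
    have h1 : ⇑α '' O z = Set.range (⇑α ∘ fun y : G => y⁻¹ * z * β y) :=
      (Set.range_comp _ _).symm
    have h2 : (⇑α ∘ fun y : G => y⁻¹ * z * β y)
        = (fun y : G => y⁻¹ * α z * β y) ∘ ⇑α := by
      funext y
      simp only [Function.comp_apply, map_mul, map_inv, hcomm]
    rw [h1, h2, Function.Surjective.range_comp α.surjective]
  set f : ℤ → Set G := (fun n => O ((α ^ n) x₀)) with hf
  have hper : ∀ m : ℤ, f (m + k) = f m := by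
    intro m
    have h1 : (α ^ (m + k)) x₀ = β ((α ^ m) x₀) := by
      rw [add_comm, zpow_add]; rfl
    show O ((α ^ (m + k)) x₀) = O ((α ^ m) x₀)
    rw [h1, Obeta]
  have hstep : ∀ m : ℤ, f (m + 1) = ⇑α '' f m := by
    intro m
    have h1 : (α ^ (m + 1)) x₀ = α ((α ^ m) x₀) := by
      rw [add_comm, zpow_add, zpow_one]; rfl
    show O ((α ^ (m + 1)) x₀) = ⇑α '' O ((α ^ m) x₀)
    rw [h1, Oalpha]
  have hmulper : ∀ s : ℤ, ∀ m : ℤ, f (m + k * s) = f m := by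
    intro s
    induction s using Int.induction_on with
    | zero => intro m; simp
    | succ t ih =>
      intro m
      have h1 : m + k * ((t : ℤ) + 1) = (m + k * t) + k := by ring
      rw [h1, hper, ih]
    | pred t ih =>
      intro m
      have h1 : (m + k * (-(t : ℤ) - 1)) + k = m + k * (-(t : ℤ)) := by ring
      calc f (m + k * (-(t : ℤ) - 1)) = f ((m + k * (-(t : ℤ) - 1)) + k) :=
            (hper _).symm
        _ = f (m + k * (-(t : ℤ))) := by rw [h1]
        _ = f m := ih m
  set κ : ℕ := k.natAbs with hκ
  have hκpos : 0 < κ := Int.natAbs_pos.mpr hk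
  have hκposz : (0 : ℤ) < (κ : ℤ) := by exact_mod_cast hκpos
  have hκper : ∀ s m : ℤ, f (m + (κ : ℤ) * s) = f m := by
    rcases Int.natAbs_eq k with h | h
    · intro s m
      have h1 : (κ : ℤ) * s = k * s := by rw [h]
      rw [h1]; exact hmulper s m
    · intro s m
      have h1 : (κ : ℤ) * s = k * (-s) := by rw [h]; ring
      rw [h1]; exact hmulper (-s) m
  have hmod : ∀ n : ℤ, f n = f (n % (κ : ℤ)) := by
    intro n
    have h1 : n % (κ : ℤ) + (κ : ℤ) * (n / (κ : ℤ)) = n := Int.emod_add_mul_ediv n (κ : ℤ)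
    calc f n = f (n % (κ : ℤ) + (κ : ℤ) * (n / (κ : ℤ))) := by rw [h1]
      _ = f (n % (κ : ℤ)) := hκper _ _
  set C : Set G := ⋃ r ∈ Finset.range κ, f (r : ℤ) with hC
  have hCclosed : IsClosed C := by
    refine Set.Finite.isClosed_biUnion (Finset.range κ).finite_toSet ?_
    intro r _
    exact (Ocompact _).isClosed
  have hsub : (Set.range fun n : ℤ => (α ^ n) x₀) ⊆ C := by
    rintro _ ⟨n, rfl⟩
    have h1 : (α ^ n) x₀ ∈ f n := mem_self _
    rw [hmod n] at h1
    have h0 : 0 ≤ n % (κ : ℤ) := Int.emod_nonneg n hκposz.ne'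
    have hlt : n % (κ : ℤ) < (κ : ℤ) := Int.emod_lt_of_pos n hκposz
    set r : ℕ := (n % (κ : ℤ)).toNat with hr
    have hrz : (r : ℤ) = n % (κ : ℤ) := Int.toNat_of_nonneg h0
    have hrlt : r ∈ Finset.range κ := by
      refine Finset.mem_range.mpr ?_
      omega
    refine Set.mem_biUnion hrlt ?_
    rw [hrz]
    exact h1
  have hCuniv : C = Set.univ := by
    apply Set.eq_univ_of_univ_subset
    calc Set.univ = closure (Set.range fun n : ℤ => (α ^ n) x₀) := hx₀.closure_eq.symm
      _ ⊆ closure C := closure_mono hsub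
      _ = C := hCclosed.closure_eq
  have hone : ∃ r : ℕ, r ∈ Finset.range κ ∧ (1 : G) ∈ f (r : ℤ) := by
    have h1 : (1 : G) ∈ C := by rw [hCuniv]; trivial
    simp only [hC, Set.mem_iUnion, exists_prop] at h1
    exact h1
  obtain ⟨r, hrmem, hr1⟩ := hone
  set S : Set G := O 1 with hS
  have hfr : f (r : ℤ) = S := (Oeq' _ _ hr1).symm
  have hαS : ⇑α '' S = S := by
    have h1 := Oalpha 1
    rw [map_one] at h1
    exact h1.symm
  have hup : ∀ j : ℕ, f ((r : ℤ) + j) = S := by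
    intro j
    induction j with
    | zero => simpa using hfr
    | succ j ih =>
      have h1 : (r : ℤ) + (j + 1 : ℕ) = ((r : ℤ) + j) + 1 := by push_cast; ring
      rw [h1, hstep, ih, hαS]
  have hall : ∀ n : ℤ, f n = S := by
    intro n
    set s : ℤ := max 0 ((r : ℤ) - n) with hs
    have hs0 : 0 ≤ s := le_max_left _ _
    have hs1 : (r : ℤ) - n ≤ s := le_max_right _ _
    have h1 : (1 : ℤ) ≤ (κ : ℤ) := hκposz
    have h2 : s ≤ (κ : ℤ) * s := le_mul_of_one_le_left hs0 h1
    have h3 : (r : ℤ) ≤ n + (κ : ℤ) * s := by linarith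
    set j : ℕ := (n + (κ : ℤ) * s - r).toNat with hj
    have hjz : (j : ℤ) = n + (κ : ℤ) * s - r := Int.toNat_of_nonneg (by linarith)
    calc f n = f (n + (κ : ℤ) * s) := (hκper s n).symm
      _ = f ((r : ℤ) + j) := by rw [hjz]; ring_nf
      _ = S := hup j
  intro g
  have hg : g ∈ C := by rw [hCuniv]; trivial
  have hg2 : g ∈ S := by
    simp only [hC, Set.mem_iUnion] at hg
    obtain ⟨r', _, hg'⟩ := hg
    rwa [hall (r' : ℤ)] at hg'
  obtain ⟨y, hy⟩ := hg2
  refine ⟨y, ?_⟩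
  show y⁻¹ * (α ^ k) y = g
  have hy' : y⁻¹ * 1 * β y = g := hy
  rw [mul_one] at hy'
  exact hy'
end
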